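/- Let g be a symmetric positive definite 2×2 real matrix, μ an antisymmetric 2×2 real matrix, and h a symmetric 2×2 real matrix with trace(g⁻¹h) = 0. Then for every 2×2 real matrix B, trace((g⁻¹(Bᵀ·g + g·B))·(g⁻¹μ)·(g⁻¹h)) = 2·trace(B·(g⁻¹μ)·(g⁻¹h)). (The g-symmetrization of B can be replaced by 2B inside the trace against (g⁻¹μ)(g⁻¹h).) -/

import Mathlib

open Matrix

lemma J_mul_tracefree (a : Matrix (Fin 2) (Fin 2) ℝ) (ha : a.trace = 0) :
    !![(0:ℝ),1;-1,0] * a = -(aᵀ * !![(0:ℝ),1;-1,0]) := by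
  have h11 : a 1 1 = -a 0 0 := by
    rw [Matrix.trace_fin_two] at ha; linarith
  ext i j
  fin_cases i <;> fin_cases j <;>
    simp [Matrix.mul_apply, Fin.sum_univ_two, h11]

/-- The `g`-symmetrization `Bᵀg + gB` of a matrix `B` can be replaced by `2B` inside the
trace against `(g⁻¹μ)(g⁻¹h)`, for `g` symmetric positive definite, `μ` antisymmetric and
`h` symmetric with `tr(g⁻¹h) = 0`. -/
theorem stmt4 (g μ h : Matrix (Fin 2) (Fin 2) ℝ)
    (hg : g.PosDef) (hμ : μᵀ = -μ) (hs : h.IsSymm)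
    (ht : Matrix.trace (g⁻¹ * h) = 0) (B : Matrix (Fin 2) (Fin 2) ℝ) :
    Matrix.trace ((g⁻¹ * (Bᵀ * g + g * B)) * (g⁻¹ * μ) * (g⁻¹ * h)) =
      2 * Matrix.trace (B * (g⁻¹ * μ) * (g⁻¹ * h)) := by
  have hdet : IsUnit g.det := isUnit_iff_ne_zero.2 (ne_of_gt hg.det_pos)
  have hgg : g * g⁻¹ = 1 := Matrix.mul_nonsing_inv g hdet
  have hgg' : g⁻¹ * g = 1 := Matrix.nonsing_inv_mul g hdet
  have hgs : gᵀ = g := by have hgS : g.IsSymm := (by simpa using hg.1); exact hgS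
  have hgis : (g⁻¹)ᵀ = g⁻¹ := by
    rw [Matrix.transpose_nonsing_inv, hgs]
  have hss : hᵀ = h := hs
  have e : ∀ i j, μ i j = -μ j i := fun i j => by
    have := congrFun (congrFun hμ j) i
    simpa using this
  have hμJ : μ = μ 0 1 • !![(0:ℝ),1;-1,0] := by
    ext i j
    fin_cases i <;> fin_cases j
    · simp; linarith [e 0 0]
    · simp
    · simp; linarith [e 0 1]
    · simp; linarith [e 1 1]
  have hT : (g⁻¹ * h)ᵀ = h * g⁻¹ := by rw [Matrix.transpose_mul, hgis, hss]
  -- key anticommutation identity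
  have key : (g⁻¹ * μ) * (g⁻¹ * h) = -((g⁻¹ * h) * (g⁻¹ * μ)) := by
    have hJa : !![(0:ℝ),1;-1,0] * (g⁻¹ * h)
        = -((h * g⁻¹) * !![(0:ℝ),1;-1,0]) := by
      rw [← hT]; exact J_mul_tracefree _ ht
    rw [hμJ]
    simp only [Matrix.mul_smul, Matrix.smul_mul, ← smul_neg]
    congr 1
    calc g⁻¹ * !![(0:ℝ),1;-1,0] * (g⁻¹ * h)
        = g⁻¹ * (!![(0:ℝ),1;-1,0] * (g⁻¹ * h)) := by rw [mul_assoc]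
      _ = g⁻¹ * (-((h * g⁻¹) * !![(0:ℝ),1;-1,0])) := by rw [hJa]
      _ = -(g⁻¹ * h * (g⁻¹ * !![(0:ℝ),1;-1,0])) := by noncomm_ring
  -- split the symmetrization
  have t2 : g⁻¹ * (g * B) = B := by rw [← mul_assoc, hgg', one_mul]
  have t1 : Matrix.trace ((g⁻¹ * (Bᵀ * g)) * (g⁻¹ * μ) * (g⁻¹ * h))
      = Matrix.trace (B * (g⁻¹ * μ) * (g⁻¹ * h)) := by
    have e1 : (g⁻¹ * (Bᵀ * g)) * (g⁻¹ * μ) * (g⁻¹ * h)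
        = g⁻¹ * (Bᵀ * (μ * (g⁻¹ * h))) := by
      calc (g⁻¹ * (Bᵀ * g)) * (g⁻¹ * μ) * (g⁻¹ * h)
          = g⁻¹ * Bᵀ * (g * g⁻¹) * (μ * (g⁻¹ * h)) := by noncomm_ring
        _ = g⁻¹ * (Bᵀ * (μ * (g⁻¹ * h))) := by rw [hgg]; noncomm_ring
    have e2 : (Bᵀ * (μ * (g⁻¹ * h)) * g⁻¹)ᵀ
        = -((g⁻¹ * h) * (g⁻¹ * μ) * B) := by
      rw [Matrix.transpose_mul, Matrix.transpose_mul, Matrix.transpose_mul,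
        hgis, hT, hμ, Matrix.transpose_transpose]
      noncomm_ring
    rw [e1, Matrix.trace_mul_comm, ← Matrix.trace_transpose, e2,
      Matrix.trace_neg, Matrix.trace_mul_comm]
    rw [mul_assoc B, key]
    simp [Matrix.mul_neg, mul_assoc]
  rw [mul_add, add_mul, add_mul, Matrix.trace_add, t1, t2]
  ring
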